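/- arXiv:1803.11500 — 3 statements merged into one kernel-verified Lean document; each statement's English description precedes it below -/
import Mathlib

section
/- (Gaussian Stokes identity.) Let f ∈ ℝ[x,ω] with ω a single real variable, and for fixed x let K_x = {ω ∈ ℝ : f(x,ω) ≤ 0}. Let μ_{a,σ} be the Gaussian measure on ℝ with mean a and standard deviation σ > 0. Then for every β ∈ ℕ, ∫_{K_x} q_β(x,ω,a,σ) dμ_{a,σ}(ω) = 0, where q_β(x,ω,a,σ) := σ² ∂/∂ω [ω^β f(x,ω)] − ω^β f(x,ω)(ω − a). -/
open MeasureTheory MvPolynomial ProbabilityTheory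

section GSalg

noncomputable def GSaux {n : ℕ} (x : Fin n → ℝ) :
    MvPolynomial (Fin n ⊕ Fin 1) ℝ →ₐ[ℝ] Polynomial ℝ :=
  MvPolynomial.aeval (Sum.elim (fun j => (Polynomial.C (x j) : Polynomial ℝ))
    (fun _ => (Polynomial.X : Polynomial ℝ)))

theorem GSaux_eval {n : ℕ} (x : Fin n → ℝ) (g : MvPolynomial (Fin n ⊕ Fin 1) ℝ) (ω : ℝ) :
    (GSaux x g).eval ω = MvPolynomial.eval (Sum.elim x fun _ => ω) g := by
  induction g using MvPolynomial.induction_on with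
  | C r => simp [GSaux]
  | add p q hp hq => simp [GSaux, hp, hq] <;> simp_all [GSaux]
  | mul_X p i hp => cases i <;> simp [GSaux, hp] <;> simp_all [GSaux]

theorem GSaux_deriv {n : ℕ} (x : Fin n → ℝ) (g : MvPolynomial (Fin n ⊕ Fin 1) ℝ) :
    Polynomial.derivative (GSaux x g) = GSaux x (MvPolynomial.pderiv (Sum.inr 0) g) := by
  induction g using MvPolynomial.induction_on with
  | C r => simp [GSaux]
  | add p q hp hq => simp [map_add, hp, hq]
  | mul_X p i hp =>
    cases i with
    | inl j =>
      simp [GSaux, MvPolynomial.pderiv_X_of_ne (show (Sum.inl j : Fin n ⊕ Fin 1) ≠ Sum.inr 0 by simp),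
        map_mul, Polynomial.derivative_mul] at *
      simp [hp]
      ring
    | inr k =>
      have hk : k = 0 := Subsingleton.elim _ _
      subst hk
      simp [GSaux, map_mul, Polynomial.derivative_mul, MvPolynomial.pderiv_X_self] at *
      simp [hp]
      ring

end GSalg

section GSftc
open Filter Topology Set

theorem GS_ftc_Ioi (Ψ g : ℝ → ℝ) (hΨ : Continuous Ψ) (hg : Integrable g)
    (htop : Tendsto Ψ atTop (𝓝 0)) :
    ∀ (k : ℕ) (S : Finset ℝ) (c : ℝ), (S.filter (c < ·)).card = k →
      (∀ ω, c < ω → ω ∉ S → HasDerivAt Ψ (g ω) ω) →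
      (∀ r ∈ S, c < r → Ψ r = 0) →
      ∫ ω in Set.Ioi c, g ω = - Ψ c := by
  intro k
  induction k with
  | zero =>
    intro S c hcard hd h0
    have hnS : ∀ ω, c < ω → ω ∉ S := by
      intro ω hcω hωS
      have : ω ∈ S.filter (c < ·) := Finset.mem_filter.2 ⟨hωS, hcω⟩
      rw [Finset.card_eq_zero.1 hcard] at this
      simp at this
    rw [MeasureTheory.integral_Ioi_of_hasDerivAt_of_tendsto
      hΨ.continuousWithinAt (fun ω hω => hd ω hω (hnS ω hω)) hg.integrableOn htop]
    ring
  | succ k ih =>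
    intro S c hcard hd h0
    set T := S.filter (c < ·) with hT
    have hTne : T.Nonempty := Finset.card_pos.1 (by omega)
    set r := T.min' hTne with hr
    have hrT : r ∈ T := T.min'_mem hTne
    have hrS : r ∈ S := (Finset.mem_filter.1 hrT).1
    have hcr : c < r := (Finset.mem_filter.1 hrT).2
    have hΨr : Ψ r = 0 := h0 r hrS hcr
    have hsplit : ∫ ω in Set.Ioi c, g ω
        = (∫ ω in Set.Ioc c r, g ω) + ∫ ω in Set.Ioi r, g ω := by
      rw [← MeasureTheory.setIntegral_union (Set.Ioc_disjoint_Ioi le_rfl) measurableSet_Ioi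
        hg.integrableOn hg.integrableOn, Set.Ioc_union_Ioi_eq_Ioi hcr.le]
    have h1 : ∫ ω in Set.Ioc c r, g ω = Ψ r - Ψ c := by
      rw [← intervalIntegral.integral_of_le hcr.le]
      refine intervalIntegral.integral_eq_sub_of_hasDeriv_right hΨ.continuousOn ?_
        hg.intervalIntegrable
      intro z hz
      rw [min_eq_left hcr.le, max_eq_right hcr.le] at hz
      have hznS : z ∉ S := by
        intro hzS
        have hzT : z ∈ T := Finset.mem_filter.2 ⟨hzS, hz.1⟩
        exact absurd (T.min'_le z hzT) (not_le.2 hz.2)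
      exact (hd z hz.1 hznS).hasDerivWithinAt
    have hfil : S.filter (r < ·) = T.erase r := by
      ext s
      simp only [Finset.mem_filter, Finset.mem_erase, hT]
      constructor
      · rintro ⟨hsS, hrs⟩
        exact ⟨ne_of_gt hrs, hsS, hcr.trans hrs⟩
      · rintro ⟨hne, hsS, hcs⟩
        exact ⟨hsS, lt_of_le_of_ne (T.min'_le s (Finset.mem_filter.2 ⟨hsS, hcs⟩)) (Ne.symm hne)⟩
    have hcard' : (S.filter (r < ·)).card = k := by
      rw [hfil, Finset.card_erase_of_mem hrT, hcard]; omega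
    have h2 : ∫ ω in Set.Ioi r, g ω = - Ψ r :=
      ih S r hcard' (fun ω hrω hωS => hd ω (hcr.trans hrω) hωS)
        (fun s hsS hrs => h0 s hsS (hcr.trans hrs))
    rw [hsplit, h1, h2, hΨr]
    ring

theorem GS_ftc (Ψ g : ℝ → ℝ) (S : Finset ℝ) (hΨ : Continuous Ψ) (hg : Integrable g)
    (hd : ∀ ω ∉ S, HasDerivAt Ψ (g ω) ω)
    (h0 : ∀ r ∈ S, Ψ r = 0)
    (htop : Tendsto Ψ atTop (𝓝 0)) (hbot : Tendsto Ψ atBot (𝓝 0)) :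
    (∫ ω, g ω) = 0 := by
  obtain ⟨c, hc⟩ : ∃ c : ℝ, ∀ r ∈ S, c < r := by
    by_cases hS : S.Nonempty
    · exact ⟨S.min' hS - 1, fun r hr => lt_of_lt_of_le (by linarith) (S.min'_le r hr)⟩
    · exact ⟨0, fun r hr => absurd ⟨r, hr⟩ hS⟩
  have hsplit : (∫ ω, g ω) = (∫ ω in Set.Iic c, g ω) + ∫ ω in Set.Ioi c, g ω := by
    rw [← MeasureTheory.setIntegral_union (Set.Iic_disjoint_Ioi le_rfl) measurableSet_Ioi
      hg.integrableOn hg.integrableOn, Set.Iic_union_Ioi, MeasureTheory.setIntegral_univ]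
  have h1 : ∫ ω in Set.Iic c, g ω = Ψ c - 0 := by
    refine MeasureTheory.integral_Iic_of_hasDerivAt_of_tendsto hΨ.continuousWithinAt
      (fun ω hω => hd ω fun hωS => absurd (hc ω hωS) (not_lt.2 hω.le)) hg.integrableOn hbot
  have h2 : ∫ ω in Set.Ioi c, g ω = - Ψ c :=
    GS_ftc_Ioi Ψ g hΨ hg htop _ S c rfl
      (fun ω _ hωS => hd ω hωS) (fun r hrS _ => h0 r hrS)
  rw [hsplit, h1, h2]
  ring

end GSftc

section GSdecay
open Filter Topology Polynomial Real

theorem GS_int (Q : Polynomial ℝ) {b : ℝ} (hb : 0 < b) :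
    Integrable fun t : ℝ => Q.eval t * Real.exp (-b * t ^ 2) := by
  have key : ∀ i : ℕ, Integrable fun t : ℝ => t ^ i * Real.exp (-b * t ^ 2) := by
    intro i
    have := integrable_rpow_mul_exp_neg_mul_sq hb (s := (i : ℝ))
      (lt_of_lt_of_le neg_one_lt_zero (Nat.cast_nonneg i))
    simpa [Real.rpow_natCast] using this
  have hfn : (fun t : ℝ => Q.eval t * Real.exp (-b * t ^ 2)) =
      fun t => ∑ i ∈ Finset.range (Q.natDegree + 1),
        Q.coeff i * (t ^ i * Real.exp (-b * t ^ 2)) := by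
    funext t
    rw [Polynomial.eval_eq_sum_range, Finset.sum_mul]
    simp [mul_assoc]
  rw [hfn]
  exact integrable_finset_sum _ fun i _ => (key i).const_mul _

theorem GS_top (Q : Polynomial ℝ) {b : ℝ} (hb : 0 < b) :
    Tendsto (fun t : ℝ => Q.eval t * Real.exp (-b * t ^ 2)) atTop (𝓝 0) := by
  have h2 : Tendsto (fun t : ℝ => Q.eval t * Real.exp (-t)) atTop (𝓝 0) := by
    simpa [Real.exp_neg, div_eq_mul_inv] using Q.tendsto_div_exp_atTop
  have h1 : (fun t : ℝ => Q.eval t * Real.exp (-b * t ^ 2)) =O[atTop]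
      fun t => Q.eval t * Real.exp (-t) :=
    (Asymptotics.isBigO_refl (fun t : ℝ => Q.eval t) atTop).mul
      (exp_neg_mul_sq_isLittleO_exp_neg hb).isBigO
  exact h1.trans_tendsto h2

theorem GS_bot (Q : Polynomial ℝ) {b : ℝ} (hb : 0 < b) :
    Tendsto (fun t : ℝ => Q.eval t * Real.exp (-b * t ^ 2)) atBot (𝓝 0) := by
  have := (GS_top (Q.comp (-Polynomial.X)) hb).comp tendsto_neg_atBot_atTop
  simpa [Function.comp_def, Polynomial.eval_comp] using this

theorem GS_int' (Q : Polynomial ℝ) {b : ℝ} (hb : 0 < b) (c : ℝ) :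
    Integrable fun t : ℝ => Q.eval t * Real.exp (-b * (t - c) ^ 2) := by
  have h := (GS_int (Q.comp (Polynomial.X + Polynomial.C c)) hb).comp_sub_right c
  simpa [Polynomial.eval_comp, sub_add_cancel] using h

theorem GS_top' (Q : Polynomial ℝ) {b : ℝ} (hb : 0 < b) (c : ℝ) :
    Tendsto (fun t : ℝ => Q.eval t * Real.exp (-b * (t - c) ^ 2)) atTop (𝓝 0) := by
  have := (GS_top (Q.comp (Polynomial.X + Polynomial.C c)) hb).comp
    (tendsto_atTop_add_const_right atTop (-c) tendsto_id)
  simpa [Function.comp_def, Polynomial.eval_comp, sub_eq_add_neg] using this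

theorem GS_bot' (Q : Polynomial ℝ) {b : ℝ} (hb : 0 < b) (c : ℝ) :
    Tendsto (fun t : ℝ => Q.eval t * Real.exp (-b * (t - c) ^ 2)) atBot (𝓝 0) := by
  have := (GS_bot (Q.comp (Polynomial.X + Polynomial.C c)) hb).comp
    (tendsto_atBot_add_const_right atBot (-c) tendsto_id)
  simpa [Function.comp_def, Polynomial.eval_comp, sub_eq_add_neg] using this

end GSdecay

open Filter Topology in
/-- Gaussian Stokes identity: for a polynomial `f ∈ ℝ[x,ω]` (with `ω` a single real
variable), `x` fixed, `K_x = {ω : f(x,ω) ≤ 0}`, and the Gaussian measure `μ_{a,σ}`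
on `ℝ` with mean `a` and standard deviation `σ > 0`, one has for every `β ∈ ℕ`:
`∫_{K_x} q_β(x,ω,a,σ) dμ_{a,σ}(ω) = 0`, where
`q_β(x,ω,a,σ) = σ² ∂/∂ω [ω^β f(x,ω)] − ω^β f(x,ω)(ω − a)`. -/
theorem gaussian_stokes_identity {n : ℕ}
    (f : MvPolynomial (Fin n ⊕ Fin 1) ℝ)
    (x : Fin n → ℝ) (a σ : ℝ) (hσ : 0 < σ)
    (Kx : Set ℝ)
    (hKx : Kx = {ω : ℝ | MvPolynomial.eval (Sum.elim x fun _ => ω) f ≤ 0}) :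
    ∀ β : ℕ,
      (∫ ω in Kx,
        (σ ^ 2 *
          MvPolynomial.eval (Sum.elim x fun _ => ω)
            (MvPolynomial.pderiv (Sum.inr 0) ((X (Sum.inr 0)) ^ β * f)) -
          ω ^ β * MvPolynomial.eval (Sum.elim x fun _ => ω) f * (ω - a))
        ∂(gaussianReal a ⟨σ ^ 2, sq_nonneg σ⟩)) = 0 := by
  intro β
  classical
  have hσ2 : (σ : ℝ) ^ 2 ≠ 0 := by positivity
  set P : Polynomial ℝ := GSaux x f with hPdef
  set W : Polynomial ℝ := Polynomial.X ^ β * P with hWdef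
  have hPe : ∀ ω : ℝ, MvPolynomial.eval (Sum.elim x fun _ => ω) f = P.eval ω :=
    fun ω => (GSaux_eval x f ω).symm
  have hWuniv : GSaux x ((X (Sum.inr 0) : MvPolynomial (Fin n ⊕ Fin 1) ℝ) ^ β * f) = W := by
    rw [map_mul, map_pow, hWdef, hPdef]
    congr 1
    simp [GSaux]
  have hDe : ∀ ω : ℝ, MvPolynomial.eval (Sum.elim x fun _ => ω)
      (MvPolynomial.pderiv (Sum.inr 0) ((X (Sum.inr 0)) ^ β * f))
      = (Polynomial.derivative W).eval ω := by
    intro ω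
    rw [← GSaux_eval x _ ω, ← GSaux_deriv, hWuniv]
  have hKx' : Kx = {ω : ℝ | P.eval ω ≤ 0} := by
    rw [hKx]; ext ω; simp [hPe ω]
  have hKmeas : MeasurableSet Kx := by
    rw [hKx']
    exact measurableSet_le (Polynomial.continuous P).measurable measurable_const
  set b : ℝ := (2 * σ ^ 2)⁻¹ with hbdef
  have hb : 0 < b := by positivity
  set D : ℝ → ℝ := fun ω => Real.exp (-b * (ω - a) ^ 2) *
    ((Polynomial.derivative W).eval ω - W.eval ω * ((ω - a) / σ ^ 2)) with hDdef
  set Ψ : ℝ → ℝ := fun ω => min (P.eval ω) 0 * ω ^ β * Real.exp (-b * (ω - a) ^ 2) with hΨdef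
  -- step 1: reduce to Lebesgue integral of constant * D
  have hv : (⟨σ ^ 2, sq_nonneg σ⟩ : NNReal) ≠ 0 := by
    intro h
    exact hσ2 (congrArg NNReal.toReal h)
  set v : NNReal := ⟨σ ^ 2, sq_nonneg σ⟩ with hvdef
  have hmeas_pdf : Measurable fun ω => Real.toNNReal (gaussianPDFReal a v ω) :=
    (measurable_gaussianPDFReal a v).real_toNNReal
  have hred : (∫ ω in Kx,
        (σ ^ 2 *
          MvPolynomial.eval (Sum.elim x fun _ => ω)
            (MvPolynomial.pderiv (Sum.inr 0) ((X (Sum.inr 0)) ^ β * f)) -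
          ω ^ β * MvPolynomial.eval (Sum.elim x fun _ => ω) f * (ω - a))
        ∂(gaussianReal a v))
      = ∫ ω in Kx, ((Real.sqrt (2 * Real.pi * (σ ^ 2)))⁻¹ * σ ^ 2) * D ω := by
    rw [gaussianReal_of_var_ne_zero _ hv, MeasureTheory.restrict_withDensity hKmeas,
      show gaussianPDF a v = fun ω => ((Real.toNNReal (gaussianPDFReal a v ω) : NNReal) : ENNReal)
        from rfl,
      integral_withDensity_eq_integral_smul hmeas_pdf]
    refine setIntegral_congr_fun hKmeas fun ω _ => ?_
    rw [NNReal.smul_def, Real.coe_toNNReal _ (gaussianPDFReal_nonneg a v ω)]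
    rw [hDe ω, hPe ω]
    show gaussianPDFReal a v ω * _ = _
    rw [gaussianPDFReal]
    have hcoe : ((v : NNReal) : ℝ) = σ ^ 2 := rfl
    rw [hcoe]
    have hexp : Real.exp (-(ω - a) ^ 2 / (2 * σ ^ 2)) = Real.exp (-b * (ω - a) ^ 2) := by
      congr 1
      rw [hbdef]
      field_simp
    rw [hexp, hDdef]
    have hWeval : W.eval ω = ω ^ β * P.eval ω := by
      rw [hWdef]; simp
    show _ = (Real.sqrt (2 * Real.pi * σ ^ 2))⁻¹ * σ ^ 2 *
      (Real.exp (-b * (ω - a) ^ 2) *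
        ((Polynomial.derivative W).eval ω - W.eval ω * ((ω - a) / σ ^ 2)))
    rw [hWeval]
    field_simp
  rw [hred, MeasureTheory.integral_const_mul]
  -- step 2: it suffices that the Lebesgue integral of D over Kx vanishes
  suffices hmain : (∫ ω in Kx, D ω) = 0 by rw [hmain, mul_zero]
  rw [← MeasureTheory.integral_indicator hKmeas]
  -- the polynomial R with D = R.eval * gaussian
  set R : Polynomial ℝ := Polynomial.derivative W
      - Polynomial.C (σ ^ 2)⁻¹ * (W * (Polynomial.X - Polynomial.C a)) with hRdef
  have hDR : D = fun ω => R.eval ω * Real.exp (-b * (ω - a) ^ 2) := by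
    funext ω
    rw [hDdef, hRdef]
    simp only [Polynomial.eval_sub, Polynomial.eval_mul, Polynomial.eval_C, Polynomial.eval_X]
    field_simp
  have hDint : Integrable D := by rw [hDR]; exact GS_int' R hb a
  by_cases hP0 : P = 0
  · -- degenerate case : f(x, ·) is the zero polynomial
    have hD0 : ∀ ω : ℝ, D ω = 0 := by
      intro ω
      rw [hDdef]
      rw [hWdef, hP0]
      simp
    have : Set.indicator Kx D = fun _ => (0 : ℝ) := by
      funext ω
      simp [Set.indicator_apply, hD0 ω]
    rw [this]
    simp
  -- main case
  set S : Finset ℝ := P.roots.toFinset with hSdef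
  have hΨcont : Continuous Ψ := by
    rw [hΨdef]
    exact (((Polynomial.continuous P).min continuous_const).mul (continuous_pow β)).mul
      (Real.continuous_exp.comp (by fun_prop))
  have h0 : ∀ r ∈ S, Ψ r = 0 := by
    intro r hr
    have hroot : P.eval r = 0 := by
      have := Multiset.mem_toFinset.1 hr
      exact (Polynomial.mem_roots hP0).1 this
    rw [hΨdef]
    simp [hroot]
  have hgind : Integrable (Set.indicator Kx D) := hDint.indicator hKmeas
  -- tendsto
  have hbound : ∀ ω : ℝ, ‖Ψ ω‖ ≤ ‖W.eval ω * Real.exp (-b * (ω - a) ^ 2)‖ := by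
    intro ω
    have h1 : |min (P.eval ω) 0| ≤ |P.eval ω| := by
      rcases le_total (P.eval ω) 0 with h | h
      · rw [min_eq_left h]
      · rw [min_eq_right h]; simpa using abs_nonneg _
    have hWeval : W.eval ω = ω ^ β * P.eval ω := by rw [hWdef]; simp
    rw [hΨdef, hWeval]
    simp only [Real.norm_eq_abs, abs_mul]
    calc |min (P.eval ω) 0| * |ω ^ β| * |Real.exp (-b * (ω - a) ^ 2)|
        ≤ |P.eval ω| * |ω ^ β| * |Real.exp (-b * (ω - a) ^ 2)| := by
          have hh := mul_le_mul_of_nonneg_right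
            (mul_le_mul_of_nonneg_right h1 (abs_nonneg (ω ^ β)))
            (abs_nonneg (Real.exp (-b * (ω - a) ^ 2)))
          exact hh
      _ = |ω ^ β| * |P.eval ω| * |Real.exp (-b * (ω - a) ^ 2)| := by ring
  have hWnorm_top : Tendsto (fun ω : ℝ => ‖W.eval ω * Real.exp (-b * (ω - a) ^ 2)‖)
      atTop (𝓝 0) := by
    simpa using (GS_top' W hb a).norm
  have hWnorm_bot : Tendsto (fun ω : ℝ => ‖W.eval ω * Real.exp (-b * (ω - a) ^ 2)‖)
      atBot (𝓝 0) := by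
    simpa using (GS_bot' W hb a).norm
  have htop : Tendsto Ψ atTop (𝓝 0) := squeeze_zero_norm hbound hWnorm_top
  have hbot : Tendsto Ψ atBot (𝓝 0) := squeeze_zero_norm hbound hWnorm_bot
  -- derivative
  have hd : ∀ ω ∉ S, HasDerivAt Ψ (Set.indicator Kx D ω) ω := by
    intro ω hωS
    have hne : P.eval ω ≠ 0 := by
      intro h
      exact hωS (Multiset.mem_toFinset.2 ((Polynomial.mem_roots hP0).2 h))
    have hF : HasDerivAt (fun z : ℝ => W.eval z * Real.exp (-b * (z - a) ^ 2)) (D ω) ω := by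
      have h1 : HasDerivAt (fun z : ℝ => -b * (z - a) ^ 2) (-b * (2 * (ω - a))) ω := by
        have h0' := ((hasDerivAt_id ω).sub_const a).pow 2
        have := h0'.const_mul (-b)
        refine this.congr_deriv ?_
        norm_num
      have h2 := h1.exp
      have h3 := (W.hasDerivAt ω).mul h2
      refine h3.congr_deriv ?_
      rw [hDdef, hbdef]
      field_simp
      ring
    rcases hne.lt_or_gt with hneg | hpos
    · have hmem : ω ∈ Kx := by rw [hKx']; exact hneg.le
      have hev : ∀ᶠ z in 𝓝 ω, P.eval z < 0 :=
        ((Polynomial.continuous P).continuousAt (x := ω)).eventually_lt_const hneg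
      have heq : Ψ =ᶠ[𝓝 ω] fun z => W.eval z * Real.exp (-b * (z - a) ^ 2) := by
        filter_upwards [hev] with z hz
        have hWeval : W.eval z = z ^ β * P.eval z := by rw [hWdef]; simp
        rw [hΨdef]
        show min (P.eval z) 0 * z ^ β * _ = _
        rw [min_eq_left hz.le, hWeval]
        ring
      rw [Set.indicator_of_mem hmem]
      exact hF.congr_of_eventuallyEq heq
    · have hmem : ω ∉ Kx := by rw [hKx']; exact not_le.2 hpos
      have hev : ∀ᶠ z in 𝓝 ω, 0 < P.eval z :=
        ((Polynomial.continuous P).continuousAt (x := ω)).eventually_const_lt hpos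
      have heq : Ψ =ᶠ[𝓝 ω] fun _ => (0 : ℝ) := by
        filter_upwards [hev] with z hz
        rw [hΨdef]
        show min (P.eval z) 0 * z ^ β * _ = _
        rw [min_eq_right hz.le]
        ring
      rw [Set.indicator_of_notMem hmem]
      exact (hasDerivAt_const ω (0 : ℝ)).congr_of_eventuallyEq heq
  exact GS_ftc Ψ (Set.indicator Kx D) S hΨcont hgind hd h0 htop hbot
end

section
/- (Mixtures with bounded-density conditionals give absolutely continuous conditional identification.) Let ν be a positive measure on X × A whose x-marginal ν_x satisfies dν_x = η(x) dλ for some measurable 0 ≤ η ≤ 1, and suppose for a measurable map x ↦ a(x) ∈ A and all α ∈ ℕⁿ, γ ∈ ℕᵗ: ∫ x^α a^γ dν(x,a) = ∫_X x^α a(x)^γ η(x) dλ(x). If A ⊂ ℝᵗ is compact, then the conditional probability ν̂(da|x) of ν given x equals the Dirac measure δ_{a(x)} for ν_x-almost every x. -/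
open MeasureTheory ProbabilityTheory
open scoped NNReal ENNReal


lemma integrable_of_continuous_of_null_compl {α : Type*} [MeasurableSpace α] [TopologicalSpace α]
    [OpensMeasurableSpace α] {μ : Measure α} [IsFiniteMeasure μ] {K : Set α} (hK : IsCompact K)
    (hμ : μ Kᶜ = 0) {f : α → ℝ} (hf : Continuous f) : Integrable f μ := by
  obtain ⟨C, hC⟩ : ∃ C, ∀ x ∈ K, ‖f x‖ ≤ C :=
    hK.exists_bound_of_continuousOn hf.continuousOn
  refine ⟨hf.aestronglyMeasurable, HasFiniteIntegral.of_bounded (C := C) ?_⟩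
  filter_upwards [(mem_ae_iff (s := K)).mpr hμ] with x hx using hC x hx

noncomputable def coordsFn (n t : ℕ) : (Fin n ⊕ Fin t) → C((Fin n → ℝ) × (Fin t → ℝ), ℝ) :=
  Sum.elim (fun i => ⟨fun q => q.1 i, by fun_prop⟩) (fun j => ⟨fun q => q.2 j, by fun_prop⟩)

lemma closure_monomial {n t : ℕ} (u : C((Fin n → ℝ) × (Fin t → ℝ), ℝ))
    (hu : u ∈ Submonoid.closure (Set.range (coordsFn n t))) :
    ∃ (α : Fin n → ℕ) (γ : Fin t → ℕ),
      (u : (Fin n → ℝ) × (Fin t → ℝ) → ℝ) =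
        fun q => (∏ i, q.1 i ^ α i) * ∏ i, q.2 i ^ γ i := by
  induction hu using Submonoid.closure_induction with
  | mem x hx =>
    obtain ⟨i, rfl⟩ := hx
    cases i with
    | inl i =>
      refine ⟨fun i' => if i' = i then 1 else 0, 0, ?_⟩
      ext q
      simp [coordsFn, pow_ite, Finset.prod_ite_eq']
    | inr j =>
      refine ⟨0, fun j' => if j' = j then 1 else 0, ?_⟩
      ext q
      simp [coordsFn, pow_ite, Finset.prod_ite_eq']
  | one => exact ⟨0, 0, by ext q; simp⟩
  | mul a b _ _ ha hb =>
    obtain ⟨α₁, γ₁, h₁⟩ := ha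
    obtain ⟨α₂, γ₂, h₂⟩ := hb
    refine ⟨α₁ + α₂, γ₁ + γ₂, ?_⟩
    ext q
    simp only [ContinuousMap.mul_apply, h₁, h₂, Pi.add_apply, pow_add, Finset.prod_mul_distrib]
    ring

/-- If the `x`-marginal of `ν` on `X × A` has density `η` (with `0 ≤ η ≤ 1`)
w.r.t. `λ`, and the mixed moments of `ν` agree with those of the graph measure of
a measurable map `x ↦ a(x) ∈ A` (with `A` compact), then the conditional
probability `ν̂(da|x)` equals the Dirac measure `δ_{a(x)}` for `ν_x`-a.e. `x`. -/
theorem conditional_is_dirac {n t : ℕ}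
    (X : Set (Fin n → ℝ)) (hX : IsCompact X)
    (A : Set (Fin t → ℝ)) (hA : IsCompact A)
    (lam : Measure (Fin n → ℝ)) (hlam : lam = volume.restrict X)
    (ν : Measure ((Fin n → ℝ) × (Fin t → ℝ))) [IsFiniteMeasure ν]
    (hνsupp : ν (X ×ˢ A)ᶜ = 0)
    (η : (Fin n → ℝ) → ℝ) (hηmeas : Measurable η)
    (hη0 : ∀ x, 0 ≤ η x) (hη1 : ∀ x, η x ≤ 1)
    (hmarg : ν.map Prod.fst = lam.withDensity fun x => ENNReal.ofReal (η x))
    (asel : (Fin n → ℝ) → (Fin t → ℝ)) (haselmeas : Measurable asel)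
    (haselA : ∀ x ∈ X, asel x ∈ A)
    (hmoments : ∀ (α : Fin n → ℕ) (γ : Fin t → ℕ),
      (∫ q, ((∏ i, q.1 i ^ α i) * ∏ i, q.2 i ^ γ i) ∂ν) =
        ∫ x, ((∏ i, x i ^ α i) * (∏ i, asel x i ^ γ i) * η x) ∂lam) :
    ∀ᵐ x ∂(ν.map Prod.fst), ν.condKernel x = Measure.dirac (asel x) := by
  have hXm : MeasurableSet X := hX.isClosed.measurableSet
  have hAm : MeasurableSet A := hA.isClosed.measurableSet
  set μ₀ : Measure (Fin n → ℝ) := ν.map Prod.fst with hμ₀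
  haveI hμ₀fin : IsFiniteMeasure μ₀ := ν.isFiniteMeasure_map Prod.fst
  set g : (Fin n → ℝ) → (Fin n → ℝ) × (Fin t → ℝ) := fun x => (x, asel x) with hg
  have hgmeas : Measurable g := measurable_id.prodMk haselmeas
  set ν' : Measure ((Fin n → ℝ) × (Fin t → ℝ)) := μ₀.map g with hν'
  haveI hν'fin : IsFiniteMeasure ν' := μ₀.isFiniteMeasure_map g
  set K : Set ((Fin n → ℝ) × (Fin t → ℝ)) := X ×ˢ A with hKdef
  have hK : IsCompact K := hX.prod hA
  have hKm : MeasurableSet K := hXm.prod hAm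
  have hμ₀X : μ₀ Xᶜ = 0 := by
    rw [hmarg, hlam, withDensity_apply _ hXm.compl,
      Measure.restrict_restrict hXm.compl]
    simp
  have hν'supp : ν' Kᶜ = 0 := by
    rw [hν', Measure.map_apply hgmeas hKm.compl]
    refine measure_mono_null ?_ hμ₀X
    intro x hx
    simp only [Set.mem_preimage, Set.mem_compl_iff, hKdef, Set.mem_prod] at hx ⊢
    intro hxX
    exact hx ⟨hxX, haselA x hxX⟩
  have hνae : ∀ᵐ q ∂ν, q ∈ K := (mem_ae_iff (s := K)).mpr hνsupp
  have hν'ae : ∀ᵐ q ∂ν', q ∈ K := (mem_ae_iff (s := K)).mpr hν'supp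
  -- integral against μ₀ as integral against lam with density η
  have hint_μ₀ : ∀ f : (Fin n → ℝ) → ℝ, ∫ x, f x ∂μ₀ = ∫ x, f x * η x ∂lam := by
    intro f
    rw [hmarg]
    have hd : (fun x => ENNReal.ofReal (η x)) = fun x => ((Real.toNNReal (η x) : ℝ≥0) : ℝ≥0∞) :=
      rfl
    rw [hd, integral_withDensity_eq_integral_smul (by fun_prop) f]
    congr 1
    ext x
    simp [NNReal.smul_def, Real.coe_toNNReal _ (hη0 x), mul_comm]
  -- integrability of continuous functions
  have hintν : ∀ f : (Fin n → ℝ) × (Fin t → ℝ) → ℝ, Continuous f → Integrable f ν :=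
    fun f hf => integrable_of_continuous_of_null_compl hK hνsupp hf
  have hintν' : ∀ f : (Fin n → ℝ) × (Fin t → ℝ) → ℝ, Continuous f → Integrable f ν' :=
    fun f hf => integrable_of_continuous_of_null_compl hK hν'supp hf
  -- moment equality between ν and ν'
  have hmono : ∀ (α : Fin n → ℕ) (γ : Fin t → ℕ),
      (∫ q, ((∏ i, q.1 i ^ α i) * ∏ i, q.2 i ^ γ i) ∂ν) =
        ∫ q, ((∏ i, q.1 i ^ α i) * ∏ i, q.2 i ^ γ i) ∂ν' := by
    intro α γ
    have hcont : Continuous fun q : (Fin n → ℝ) × (Fin t → ℝ) =>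
        (∏ i, q.1 i ^ α i) * ∏ i, q.2 i ^ γ i := by fun_prop
    rw [hmoments α γ, hν',
      integral_map hgmeas.aemeasurable hcont.aestronglyMeasurable, hint_μ₀]
  -- equality of integrals for all elements of the polynomial algebra
  have hspan : ∀ u : C((Fin n → ℝ) × (Fin t → ℝ), ℝ),
      u ∈ Algebra.adjoin ℝ (Set.range (coordsFn n t)) →
      ∫ q, u q ∂ν = ∫ q, u q ∂ν' := by
    intro u hu
    have hu' : u ∈ Submodule.span ℝ
        ((Submonoid.closure (Set.range (coordsFn n t)) : Submonoid _) : Set _) := by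
      rw [← Algebra.adjoin_eq_span]; exact hu
    clear hu
    induction hu' using Submodule.span_induction with
    | mem x hx =>
      obtain ⟨α, γ, hx'⟩ := closure_monomial x hx
      calc ∫ q, x q ∂ν = ∫ q, ((∏ i, q.1 i ^ α i) * ∏ i, q.2 i ^ γ i) ∂ν := by rw [hx']
        _ = ∫ q, ((∏ i, q.1 i ^ α i) * ∏ i, q.2 i ^ γ i) ∂ν' := hmono α γ
        _ = ∫ q, x q ∂ν' := by rw [hx']
    | zero => simp
    | add a b _ _ ha hb =>
      simp only [ContinuousMap.add_apply]
      rw [integral_add (hintν a a.continuous) (hintν b b.continuous),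
        integral_add (hintν' a a.continuous) (hintν' b b.continuous), ha, hb]
    | smul c a _ ha =>
      simp only [ContinuousMap.smul_apply, smul_eq_mul]
      rw [integral_const_mul, integral_const_mul, ha]
  -- Stone–Weierstrass: integrals of all continuous functions agree
  have key : ∀ f : (Fin n → ℝ) × (Fin t → ℝ) → ℝ, Continuous f →
      ∫ q, f q ∂ν = ∫ q, f q ∂ν' := by
    intro f hf
    set c : ℝ := (ν Set.univ).toReal + (ν' Set.univ).toReal with hc
    have hc0 : 0 ≤ c := by positivity
    have hle : ∀ ε : ℝ, 0 < ε → |(∫ q, f q ∂ν) - ∫ q, f q ∂ν'| ≤ ε * c := by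
      intro ε hε
      haveI : CompactSpace K := isCompact_iff_compactSpace.mp hK
      set ι : C(K, (Fin n → ℝ) × (Fin t → ℝ)) := ⟨Subtype.val, continuous_subtype_val⟩ with hι
      set B : Subalgebra ℝ C(K, ℝ) :=
        (Algebra.adjoin ℝ (Set.range (coordsFn n t))).map
          (ContinuousMap.compRightAlgHom ℝ ℝ ι) with hB
      have hsep : B.SeparatesPoints := by
        intro p q hpq
        have hne : (p : (Fin n → ℝ) × (Fin t → ℝ)) ≠ (q : (Fin n → ℝ) × (Fin t → ℝ)) :=
          fun h => hpq (Subtype.ext h)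
        have hex : ∃ cc : Fin n ⊕ Fin t,
            coordsFn n t cc (p : (Fin n → ℝ) × (Fin t → ℝ)) ≠
              coordsFn n t cc (q : (Fin n → ℝ) × (Fin t → ℝ)) := by
          by_contra hcon
          push_neg at hcon
          apply hne
          have h1 : (p : (Fin n → ℝ) × (Fin t → ℝ)).1 = (q : (Fin n → ℝ) × (Fin t → ℝ)).1 := by
            funext i; simpa [coordsFn] using hcon (Sum.inl i)
          have h2 : (p : (Fin n → ℝ) × (Fin t → ℝ)).2 = (q : (Fin n → ℝ) × (Fin t → ℝ)).2 := by
            funext j; simpa [coordsFn] using hcon (Sum.inr j)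
          exact Prod.ext h1 h2
        obtain ⟨cc, hcc⟩ := hex
        exact ⟨_, ⟨ContinuousMap.compRightAlgHom ℝ ℝ ι (coordsFn n t cc),
          Subalgebra.mem_map.mpr ⟨coordsFn n t cc, Algebra.subset_adjoin ⟨cc, rfl⟩, rfl⟩, rfl⟩,
          hcc⟩
      obtain ⟨⟨g₀, hg₀B⟩, hg₀⟩ :=
        ContinuousMap.exists_mem_subalgebra_near_continuous_of_separatesPoints B hsep
          (fun k : K => f k) (hf.comp continuous_subtype_val) ε hε
      obtain ⟨p, hpA, rfl⟩ := hg₀B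
      have hbound : ∀ q ∈ K, ‖f q - p q‖ ≤ ε := by
        intro q hq
        have h := hg₀ ⟨q, hq⟩
        simp only [ContinuousMap.compRightAlgHom_apply, ContinuousMap.comp_apply] at h
        rw [norm_sub_rev]
        exact le_of_lt h
      have h1 : ‖(∫ q, f q ∂ν) - ∫ q, p q ∂ν‖ ≤ ε * (ν Set.univ).toReal := by
        rw [← integral_sub (hintν f hf) (hintν p p.continuous)]
        refine norm_integral_le_of_norm_le_const ?_
        filter_upwards [hνae] with q hq using hbound q hq
      have h2 : ‖(∫ q, f q ∂ν') - ∫ q, p q ∂ν'‖ ≤ ε * (ν' Set.univ).toReal := by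
        rw [← integral_sub (hintν' f hf) (hintν' p p.continuous)]
        refine norm_integral_le_of_norm_le_const ?_
        filter_upwards [hν'ae] with q hq using hbound q hq
      have h3 : ∫ q, p q ∂ν = ∫ q, p q ∂ν' := hspan p hpA
      calc |(∫ q, f q ∂ν) - ∫ q, f q ∂ν'|
          = ‖((∫ q, f q ∂ν) - ∫ q, p q ∂ν) - ((∫ q, f q ∂ν') - ∫ q, p q ∂ν')‖ := by
            rw [Real.norm_eq_abs, h3]; ring_nf
        _ ≤ ‖(∫ q, f q ∂ν) - ∫ q, p q ∂ν‖ + ‖(∫ q, f q ∂ν') - ∫ q, p q ∂ν'‖ :=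
            norm_sub_le _ _
        _ ≤ ε * (ν Set.univ).toReal + ε * (ν' Set.univ).toReal := add_le_add h1 h2
        _ = ε * c := by rw [hc]; ring
    have habs : |(∫ q, f q ∂ν) - ∫ q, f q ∂ν'| ≤ 0 := by
      refine le_of_forall_pos_le_add ?_
      intro ε hε
      have h := hle (ε / (c + 1)) (by positivity)
      have : ε / (c + 1) * c ≤ ε := by
        rw [div_mul_eq_mul_div, div_le_iff₀ (by linarith)]
        nlinarith
      linarith
    have := abs_nonpos_iff.mp habs
    linarith [sub_eq_zero.mp this]
  -- the two measures agree
  have hνν' : ν = ν' := by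
    refine ext_of_forall_lintegral_eq_of_IsFiniteMeasure ?_
    intro f
    have h1 : ∫⁻ x, f x ∂ν ≠ ⊤ := (f.lintegral_lt_top_of_nnreal ν).ne
    have h2 : ∫⁻ x, f x ∂ν' ≠ ⊤ := (f.lintegral_lt_top_of_nnreal ν').ne
    rw [← ENNReal.toReal_eq_toReal_iff' h1 h2,
      BoundedContinuousFunction.toReal_lintegral_coe_eq_integral f ν,
      BoundedContinuousFunction.toReal_lintegral_coe_eq_integral f ν']
    exact key (fun x => (f x : ℝ)) (NNReal.continuous_coe.comp f.continuous)
  -- ν' is the composition of μ₀ with the deterministic kernel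
  have hcomp : ν' = μ₀ ⊗ₘ Kernel.deterministic asel haselmeas := by
    ext s hs
    rw [Measure.compProd_apply hs, hν', Measure.map_apply hgmeas hs]
    have hker : ∀ x, Kernel.deterministic asel haselmeas x (Prod.mk x ⁻¹' s) =
        (g ⁻¹' s).indicator (fun _ => 1) x := by
      intro x
      rw [Kernel.deterministic_apply' haselmeas x (measurable_prodMk_left hs)]
      by_cases hx : x ∈ g ⁻¹' s
      · simp only [Set.indicator_of_mem hx]
        have : asel x ∈ Prod.mk x ⁻¹' s := hx
        simp [Set.indicator_of_mem this]
      · simp only [Set.indicator_of_notMem hx]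
        have : asel x ∉ Prod.mk x ⁻¹' s := hx
        simp [Set.indicator_of_notMem this]
    rw [lintegral_congr hker, lintegral_indicator (hgmeas hs)]
    simp
  -- conclude via uniqueness of disintegration
  have hfst : ν.fst = μ₀ := rfl
  have hdis : ν = ν.fst ⊗ₘ Kernel.deterministic asel haselmeas := by
    rw [hfst, ← hcomp, ← hνν']
  have huniq := eq_condKernel_of_measure_eq_compProd
    (Kernel.deterministic asel haselmeas) hdis
  rw [hfst] at huniq
  filter_upwards [huniq] with x hx
  rw [← hx, Kernel.deterministic_apply]
end

section
/- (Optimal value of the ideal LP.) Suppose x ↦ a(x) ∈ A and x ↦ κ(x) = μ_{a(x)}(K_x) = max_{a∈A} μ_a(K_x) are measurable. Then the infinite-dimensional LP sup{φ(K) : φ ∈ M₊(K), ψ ∈ P(X×A), φ ≤ T*ψ, ψ_x = λ} has optimal value ρ = ∫_X κ(x) dλ(x), attained at dφ*(x,ω) = 1_K(x,ω) μ_{a(x)}(dω) λ(dx) and dψ*(x,a) = δ_{a(x)}(da) λ(dx). -/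
open MeasureTheory MvPolynomial
open scoped Classical

/-- A kernel obtained by truncating a measurable family of measures outside a
measurable set. -/
noncomputable def truncKernel {α β : Type*} [MeasurableSpace α] [MeasurableSpace β]
    (X : Set α) (hXm : MeasurableSet X) (μ : α → Measure β) (hμ : Measurable μ) :
    ProbabilityTheory.Kernel α β where
  toFun := fun x => if x ∈ X then μ x else 0
  measurable' := by
    apply Measure.measurable_of_measurable_coe
    intro s hs
    have : (fun x => (if x ∈ X then μ x else 0 : Measure β) s)
        = fun x => if x ∈ X then μ x s else 0 := by
      funext x; by_cases hx : x ∈ X <;> simp [hx]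
    rw [this]
    exact Measurable.ite hXm ((Measure.measurable_coe hs).comp hμ) measurable_const

@[simp] lemma truncKernel_apply {α β : Type*} [MeasurableSpace α] [MeasurableSpace β]
    (X : Set α) (hXm : MeasurableSet X) (μ : α → Measure β) (hμ : Measurable μ) (x : α) :
    truncKernel X hXm μ hμ x = if x ∈ X then μ x else 0 := rfl

lemma truncKernel_isFinite {α β : Type*} [MeasurableSpace α] [MeasurableSpace β]
    (X : Set α) (hXm : MeasurableSet X) (μ : α → Measure β) (hμ : Measurable μ)
    (h : ∀ x ∈ X, μ x Set.univ ≤ 1) :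
    ProbabilityTheory.IsFiniteKernel (truncKernel X hXm μ hμ) := by
  refine ⟨⟨1, ENNReal.one_lt_top, fun x => ?_⟩⟩
  by_cases hx : x ∈ X
  · simpa [hx] using h x hx
  · simp [hx]

/-- Optimal value of the ideal infinite-dimensional LP. Given a measurable
selector `x ↦ a(x)` attaining `κ(x) = μ_{a(x)}(K_x) = max_{a∈A} μ_a(K_x)`, every
feasible pair `(φ, ψ)` (with `φ ≤ T*ψ` and `ψ` having `x`-marginal `λ`) satisfies
`φ(K) ≤ ∫_X κ dλ`, and the pair `(φ*, ψ*)` with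
`dφ* = 1_K μ_{a(x)}(dω) λ(dx)` and `dψ* = δ_{a(x)}(da) λ(dx)` is feasible and
attains the value `ρ = ∫_X κ dλ`. -/
theorem ideal_LP_optimal_value {n p t : ℕ}
    (X : Set (Fin n → ℝ)) (hX : IsCompact X)
    (A : Set (Fin t → ℝ)) (hA : IsCompact A)
    (Ω : Set (Fin p → ℝ))
    (f : MvPolynomial (Fin n ⊕ Fin p) ℝ)
    (K : Set ((Fin n → ℝ) × (Fin p → ℝ)))
    (hKdef : K = {q | q.1 ∈ X ∧ q.2 ∈ Ω ∧ MvPolynomial.eval (Sum.elim q.1 q.2) f ≤ 0})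
    (hKmeas : MeasurableSet K)
    (μa : (Fin t → ℝ) → Measure (Fin p → ℝ))
    (hprob : ∀ a ∈ A, IsProbabilityMeasure (μa a))
    (hmeas : ∀ B : Set (Fin p → ℝ), MeasurableSet B → Measurable fun a => μa a B)
    (lam : Measure (Fin n → ℝ)) [IsProbabilityMeasure lam] (hlamX : lam Xᶜ = 0)
    (asel : (Fin n → ℝ) → (Fin t → ℝ)) (haselmeas : Measurable asel)
    (haselA : ∀ x ∈ X, asel x ∈ A)
    (hmax : ∀ x ∈ X, ∀ a ∈ A, μa a {ω | (x, ω) ∈ K} ≤ μa (asel x) {ω | (x, ω) ∈ K}) :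
    -- (1) every feasible pair is dominated by ρ = ∫_X κ dλ
    (∀ (φ : Measure ((Fin n → ℝ) × (Fin p → ℝ))), IsFiniteMeasure φ → φ Kᶜ = 0 →
      ∀ (ψ : Measure ((Fin n → ℝ) × (Fin t → ℝ))), IsProbabilityMeasure ψ →
        ψ (X ×ˢ A)ᶜ = 0 → ψ.map Prod.fst = lam →
        ∀ (ν : Measure ((Fin n → ℝ) × (Fin p → ℝ))),
          (∀ s : Set ((Fin n → ℝ) × (Fin p → ℝ)), MeasurableSet s →
            ν s = ∫⁻ q, μa q.2 {ω | (q.1, ω) ∈ s} ∂ψ) →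
          φ ≤ ν →
          φ K ≤ ∫⁻ x, μa (asel x) {ω | (x, ω) ∈ K} ∂lam) ∧
    -- (2) the pair (φ*, ψ*) is feasible and attains ρ
    (let φstar : Measure ((Fin n → ℝ) × (Fin p → ℝ)) :=
        (lam.bind fun x => (μa (asel x)).map fun ω => (x, ω)).restrict K
      let ψstar : Measure ((Fin n → ℝ) × (Fin t → ℝ)) :=
        lam.map fun x => (x, asel x)
      let νstar : Measure ((Fin n → ℝ) × (Fin p → ℝ)) :=
        lam.bind fun x => (μa (asel x)).map fun ω => (x, ω)
      φstar Kᶜ = 0 ∧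
      IsProbabilityMeasure ψstar ∧
      ψstar (X ×ˢ A)ᶜ = 0 ∧
      ψstar.map Prod.fst = lam ∧
      (∀ s : Set ((Fin n → ℝ) × (Fin p → ℝ)), MeasurableSet s →
        νstar s = ∫⁻ q, μa q.2 {ω | (q.1, ω) ∈ s} ∂ψstar) ∧
      φstar ≤ νstar ∧
      φstar K = ∫⁻ x, μa (asel x) {ω | (x, ω) ∈ K} ∂lam) := by
  have hXm : MeasurableSet X := hX.isClosed.measurableSet
  have hAm : MeasurableSet A := hA.isClosed.measurableSet
  have hμmeas : Measurable μa :=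
    Measure.measurable_of_measurable_coe _ (fun s hs => hmeas s hs)
  -- the kernel x ↦ μa (asel x), truncated outside X
  set κ2 := truncKernel X hXm (fun x => μa (asel x)) (hμmeas.comp haselmeas) with hκ2
  haveI : ProbabilityTheory.IsFiniteKernel κ2 :=
    truncKernel_isFinite _ _ _ _ (fun x hx =>
      le_of_eq ((hprob (asel x) (haselA x hx)).measure_univ))
  -- the kernel q ↦ μa q.2, truncated outside X ×ˢ A
  set κ3 := truncKernel (X ×ˢ A) (hXm.prod hAm) (fun q => μa q.2)
    (hμmeas.comp measurable_snd) with hκ3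
  haveI : ProbabilityTheory.IsFiniteKernel κ3 :=
    truncKernel_isFinite _ _ _ _ (fun q hq =>
      le_of_eq ((hprob q.2 hq.2).measure_univ))
  have hXae : ∀ᵐ x ∂lam, x ∈ X := by
    rw [MeasureTheory.ae_iff]; exact hlamX
  -- a.e. identification of κ2 with μa ∘ asel
  have haeg : ∀ s : Set ((Fin n → ℝ) × (Fin p → ℝ)),
      (fun x => κ2 x (Prod.mk x ⁻¹' s)) =ᵐ[lam]
        fun x => μa (asel x) (Prod.mk x ⁻¹' s) := by
    intro s
    filter_upwards [hXae] with x hx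
    simp only [hκ2, truncKernel_apply, if_pos hx]
  have hgK : Measurable fun x => κ2 x (Prod.mk x ⁻¹' K) :=
    ProbabilityTheory.Kernel.measurable_kernel_prodMk_left hKmeas
  constructor
  · -- part (1)
    intro φ _ hφK ψ hψprob hψXA hψmap ν hν hle
    have hψae : ∀ᵐ q ∂ψ, q ∈ X ×ˢ A := by
      rw [MeasureTheory.ae_iff]; exact hψXA
    have h1 : φ K ≤ ν K := hle K
    rw [hν K hKmeas] at h1
    have h2 : ∫⁻ q, μa q.2 {ω | (q.1, ω) ∈ K} ∂ψ
        ≤ ∫⁻ q, κ2 q.1 (Prod.mk q.1 ⁻¹' K) ∂ψ := by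
      refine lintegral_mono_ae ?_
      filter_upwards [hψae] with q hq
      have := hmax q.1 hq.1 q.2 hq.2
      simp only [hκ2, truncKernel_apply, if_pos hq.1]
      exact this
    have h3 : ∫⁻ q, κ2 q.1 (Prod.mk q.1 ⁻¹' K) ∂ψ
        = ∫⁻ x, κ2 x (Prod.mk x ⁻¹' K) ∂lam := by
      rw [← hψmap, lintegral_map hgK measurable_fst]
    calc φ K ≤ ∫⁻ q, μa q.2 {ω | (q.1, ω) ∈ K} ∂ψ := h1
      _ ≤ ∫⁻ q, κ2 q.1 (Prod.mk q.1 ⁻¹' K) ∂ψ := h2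
      _ = ∫⁻ x, κ2 x (Prod.mk x ⁻¹' K) ∂lam := h3
      _ = ∫⁻ x, μa (asel x) {ω | (x, ω) ∈ K} ∂lam := lintegral_congr_ae (haeg K)
  · -- part (2)
    intro φstar ψstar νstar
    have hpair : Measurable fun x : Fin n → ℝ => (x, asel x) :=
      measurable_id.prodMk haselmeas
    -- the measurable version of x ↦ (μa (asel x)).map (Prod.mk x)
    have hMmeas : Measurable fun x => (κ2 x).map (Prod.mk x) := by
      apply Measure.measurable_of_measurable_coe
      intro s hs
      have : (fun x => ((κ2 x).map (Prod.mk x)) s)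
          = fun x => κ2 x (Prod.mk x ⁻¹' s) := by
        funext x; exact Measure.map_apply measurable_prodMk_left hs
      rw [this]
      exact ProbabilityTheory.Kernel.measurable_kernel_prodMk_left hs
    have hmM : (fun x => (μa (asel x)).map fun ω => (x, ω)) =ᵐ[lam]
        fun x => (κ2 x).map (Prod.mk x) := by
      filter_upwards [hXae] with x hx
      simp only [hκ2, truncKernel_apply, if_pos hx]
    have hbind : νstar = lam.bind fun x => (κ2 x).map (Prod.mk x) := by
      show lam.bind _ = _
      simp only [Measure.bind]
      rw [Measure.map_congr hmM]
    have hνstar_apply : ∀ s : Set ((Fin n → ℝ) × (Fin p → ℝ)), MeasurableSet s →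
        νstar s = ∫⁻ x, κ2 x (Prod.mk x ⁻¹' s) ∂lam := by
      intro s hs
      rw [hbind, Measure.bind_apply hs hMmeas.aemeasurable]
      refine lintegral_congr fun x => ?_
      exact Measure.map_apply measurable_prodMk_left hs
    have hψstarXA : ψstar (X ×ˢ A)ᶜ = 0 := by
      show (lam.map _) _ = 0
      rw [Measure.map_apply hpair (hXm.prod hAm).compl]
      refine measure_mono_null ?_ hlamX
      intro x hx
      simp only [Set.mem_preimage, Set.mem_compl_iff, Set.mem_prod] at hx
      intro hxX
      exact hx ⟨hxX, haselA x hxX⟩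
    refine ⟨?_, ?_, hψstarXA, ?_, ?_, Measure.restrict_le_self, ?_⟩
    · -- φstar Kᶜ = 0
      show (νstar.restrict K) Kᶜ = 0
      rw [Measure.restrict_apply hKmeas.compl, Set.compl_inter_self, measure_empty]
    · -- ψstar is a probability measure
      exact Measure.isProbabilityMeasure_map hpair.aemeasurable
    · -- x-marginal of ψstar is lam
      show (lam.map _).map Prod.fst = lam
      rw [Measure.map_map measurable_fst hpair]
      have : (Prod.fst ∘ fun x : Fin n → ℝ => (x, asel x)) = id := rfl
      rw [this, Measure.map_id]
    · -- νstar is T* of ψstar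
      intro s hs
      have hs' : MeasurableSet
          ((fun r : ((Fin n → ℝ) × (Fin t → ℝ)) × (Fin p → ℝ) => (r.1.1, r.2)) ⁻¹' s) :=
        ((measurable_fst.comp measurable_fst).prodMk measurable_snd) hs
      have hf3 : Measurable fun q : (Fin n → ℝ) × (Fin t → ℝ) =>
          κ3 q (Prod.mk q ⁻¹'
            ((fun r : ((Fin n → ℝ) × (Fin t → ℝ)) × (Fin p → ℝ) => (r.1.1, r.2)) ⁻¹' s)) :=
        ProbabilityTheory.Kernel.measurable_kernel_prodMk_left hs'
      have hψstar_ae : ∀ᵐ q ∂ψstar, q ∈ X ×ˢ A := by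
        rw [MeasureTheory.ae_iff]; exact hψstarXA
      have step1 : ∫⁻ q, μa q.2 {ω | (q.1, ω) ∈ s} ∂ψstar
          = ∫⁻ q, κ3 q (Prod.mk q ⁻¹'
              ((fun r : ((Fin n → ℝ) × (Fin t → ℝ)) × (Fin p → ℝ) => (r.1.1, r.2)) ⁻¹' s)) ∂ψstar := by
        refine lintegral_congr_ae ?_
        filter_upwards [hψstar_ae] with q hq
        simp only [hκ3, truncKernel_apply, if_pos hq]
        rfl
      have step2 : ∫⁻ q, κ3 q (Prod.mk q ⁻¹'
              ((fun r : ((Fin n → ℝ) × (Fin t → ℝ)) × (Fin p → ℝ) => (r.1.1, r.2)) ⁻¹' s)) ∂ψstar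
          = ∫⁻ x, κ3 (x, asel x) (Prod.mk (x, asel x) ⁻¹'
              ((fun r : ((Fin n → ℝ) × (Fin t → ℝ)) × (Fin p → ℝ) => (r.1.1, r.2)) ⁻¹' s)) ∂lam := by
        show ∫⁻ q, _ ∂(lam.map _) = _
        rw [lintegral_map hf3 hpair]
      have step3 : ∀ x, κ3 (x, asel x) (Prod.mk (x, asel x) ⁻¹'
              ((fun r : ((Fin n → ℝ) × (Fin t → ℝ)) × (Fin p → ℝ) => (r.1.1, r.2)) ⁻¹' s))
          = κ2 x (Prod.mk x ⁻¹' s) := by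
        intro x
        by_cases hx : x ∈ X
        · have hxA : (x, asel x) ∈ X ×ˢ A := ⟨hx, haselA x hx⟩
          simp only [hκ2, hκ3, truncKernel_apply, if_pos hx, if_pos hxA]
          rfl
        · have hxA : (x, asel x) ∉ X ×ˢ A := fun h => hx h.1
          simp only [hκ2, hκ3, truncKernel_apply, if_neg hx, if_neg hxA]
          simp
      rw [hνstar_apply s hs, step1, step2]
      exact (lintegral_congr step3).symm
    · -- value of φstar at K
      show (νstar.restrict K) K = _
      rw [Measure.restrict_apply hKmeas, Set.inter_self, hνstar_apply K hKmeas]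
      exact lintegral_congr_ae (haeg K)
end
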